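/- Let f_c and f_d be exponential densities with rates λ_c and λ_d. The Laplace transforms M̂_↑(s), M̂_↓(s) of the functions M_↑, M_↓ satisfying the renewal equations M_↑(t) = t∫_t^∞ f_c + ∫₀^t f_c(x)(x + M_↓(t−x))dx and M_↓(t) = (f_d * M_↑)(t) are given by M̂_↓(s) = f_d*(s)·(1 − f_c*(s))/( s²·(1 − f_c*(s) f_d*(s)) ), where f*(s) denotes the Laplace transform of f. -/

import Mathlib

open Real MeasureTheory intervalIntegral

lemma intOn_exp {a : ℝ} (ha : 0 < a) :
    IntegrableOn (fun t : ℝ => Real.exp (-a * t)) (Set.Ioi 0) := by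
  have h := integrableOn_rpow_mul_exp_neg_mul_rpow (s := 0) (p := 1) (b := a)
    (by norm_num) one_pos ha
  refine h.congr_fun (fun x _ => ?_) measurableSet_Ioi
  simp [Real.rpow_one]

lemma intOn_texp {a : ℝ} (ha : 0 < a) :
    IntegrableOn (fun t : ℝ => Real.exp (-a * t) * t) (Set.Ioi 0) := by
  have h := integrableOn_rpow_mul_exp_neg_mul_rpow (s := 1) (p := 1) (b := a)
    (by norm_num) one_pos ha
  refine h.congr_fun (fun x _ => ?_) measurableSet_Ioi
  simp [Real.rpow_one, mul_comm]

lemma Ioi_integral_exp {a : ℝ} (ha : 0 < a) :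
    (∫ t in Set.Ioi (0:ℝ), Real.exp (-a * t)) = 1 / a := by
  have h := Real.integral_rpow_mul_exp_neg_mul_Ioi (a := 1) (r := a) one_pos ha
  rw [Real.Gamma_one, mul_one, Real.rpow_one] at h
  rw [← h]
  refine setIntegral_congr_fun measurableSet_Ioi (fun x _ => ?_)
  simp [neg_mul]

lemma Ioi_integral_texp {a : ℝ} (ha : 0 < a) :
    (∫ t in Set.Ioi (0:ℝ), Real.exp (-a * t) * t) = 1 / a ^ 2 := by
  have h := Real.integral_rpow_mul_exp_neg_mul_Ioi (a := 2) (r := a) two_pos ha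
  rw [Real.Gamma_two, mul_one] at h
  rw [show ((2:ℝ) - 1) = 1 by norm_num] at h
  have h2 : ((1:ℝ)/a) ^ (2:ℝ) = 1 / a ^ 2 := by
    rw [show (2:ℝ) = ((2:ℕ):ℝ) by norm_num, Real.rpow_natCast]
    norm_num
  rw [h2] at h
  rw [← h]
  refine setIntegral_congr_fun measurableSet_Ioi (fun x _ => ?_)
  rw [Real.rpow_one, neg_mul, mul_comm]

lemma intOn_t2exp {a : ℝ} (ha : 0 < a) :
    IntegrableOn (fun t : ℝ => Real.exp (-a * t) * t ^ 2) (Set.Ioi 0) := by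
  have h := integrableOn_rpow_mul_exp_neg_mul_rpow (s := 2) (p := 1) (b := a)
    (by norm_num) one_pos ha
  refine h.congr_fun (fun x hx => ?_) measurableSet_Ioi
  beta_reduce
  rw [Real.rpow_one, show (2:ℝ) = ((2:ℕ):ℝ) by norm_num, Real.rpow_natCast, mul_comm]

lemma lt_conv {l s : ℝ} (hl : 0 < l) (hs : 0 < s) {g : ℝ → ℝ} (hg : Continuous g)
    {C : ℝ} (hgb : ∀ t ≥ (0:ℝ), |g t| ≤ C * (1 + t)) :
    (∫ t in Set.Ioi (0:ℝ), Real.exp (-s*t) * ∫ x in (0:ℝ)..t, l * Real.exp (-l*x) * g (t-x))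
      = l / (s + l) * ∫ t in Set.Ioi (0:ℝ), Real.exp (-s*t) * g t := by
  have hC : 0 ≤ C := by
    have := hgb 0 le_rfl
    simp at this
    exact le_trans (abs_nonneg _) this
  obtain ⟨F, hF⟩ : ∃ F : ℝ → ℝ → ℝ,
      F = fun t x => Real.exp (-s*t) * (l * Real.exp (-l*x) * g (t-x)) := ⟨_, rfl⟩
  obtain ⟨Φ, hΦ⟩ : ∃ Φ : ℝ → ℝ → ℝ,
      Φ = fun t x => Set.indicator (Set.Ioc 0 t) (F t) x := ⟨_, rfl⟩
  obtain ⟨B, hB⟩ : ∃ B : ℝ, B = ∫ t in Set.Ioi (0:ℝ), Real.exp (-s*t) * g t := ⟨_, rfl⟩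
  have hFc : Continuous (fun p : ℝ × ℝ => F p.1 p.2) := by
    rw [hF]
    apply Continuous.mul
    · exact Real.continuous_exp.comp (continuous_const.mul continuous_fst)
    · exact Continuous.mul
        (continuous_const.mul (Real.continuous_exp.comp (continuous_const.mul continuous_snd)))
        (hg.comp (continuous_fst.sub continuous_snd))
  have hS : MeasurableSet {p : ℝ × ℝ | p.2 ∈ Set.Ioc 0 p.1} := by
    have h1 : MeasurableSet {p : ℝ × ℝ | (0:ℝ) < p.2} :=
      measurableSet_lt measurable_const measurable_snd
    have h2 : MeasurableSet {p : ℝ × ℝ | p.2 ≤ p.1} :=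
      measurableSet_le measurable_snd measurable_fst
    exact (h1.inter h2)
  have hΦeq : (Function.uncurry Φ) =
      Set.indicator {p : ℝ × ℝ | p.2 ∈ Set.Ioc 0 p.1} (fun p => F p.1 p.2) := by
    funext p
    simp only [Function.uncurry, hΦ]
    by_cases hp : p.2 ∈ Set.Ioc 0 p.1
    · rw [Set.indicator_of_mem hp,
        Set.indicator_of_mem (show p ∈ {p : ℝ × ℝ | p.2 ∈ Set.Ioc 0 p.1} from hp)]
    · rw [Set.indicator_of_notMem hp,
        Set.indicator_of_notMem (show p ∉ {p : ℝ × ℝ | p.2 ∈ Set.Ioc 0 p.1} from hp)]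
  have hΦm : AEStronglyMeasurable (Function.uncurry Φ)
      ((volume.restrict (Set.Ioi 0)).prod volume) := by
    rw [hΦeq]
    exact (hFc.stronglyMeasurable.indicator hS).aestronglyMeasurable
  have hInt : Integrable (Function.uncurry Φ) ((volume.restrict (Set.Ioi 0)).prod volume) := by
    refine (integrable_prod_iff hΦm).2 ⟨?_, ?_⟩
    · filter_upwards with t
      show Integrable (fun x => Φ t x) volume
      have hco : Continuous (F t) := hFc.comp (Continuous.prodMk_right t)
      have h5 : IntegrableOn (F t) (Set.Ioc 0 t) volume := hco.integrableOn_Ioc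
      rw [hΦ]
      exact (integrable_indicator_iff measurableSet_Ioc).2 h5
    · have hmaj : Integrable (fun t => (l*C) * (Real.exp (-s*t) * t + Real.exp (-s*t) * t^2))
          (volume.restrict (Set.Ioi 0)) :=
        (((intOn_texp hs).add (intOn_t2exp hs))).const_mul (l*C)
      have hmeas : AEStronglyMeasurable (fun t => ∫ x, ‖Function.uncurry Φ (t, x)‖)
          (volume.restrict (Set.Ioi 0)) := hΦm.norm.integral_prod_right'
      refine hmaj.mono' hmeas ?_
      rw [ae_restrict_iff' measurableSet_Ioi]
      filter_upwards with t ht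
      have ht0 : (0:ℝ) < t := Set.mem_Ioi.1 ht
      show ‖∫ x, ‖Φ t x‖‖ ≤ _
      have hnn : 0 ≤ ∫ x, ‖Φ t x‖ := integral_nonneg (fun x => norm_nonneg _)
      rw [Real.norm_eq_abs, abs_of_nonneg hnn]
      obtain ⟨D, hD⟩ : ∃ D : ℝ, D = Real.exp (-s*t) * (l * (C * (1+t))) := ⟨_, rfl⟩
      have hDnn : 0 ≤ D := by rw [hD]; positivity
      have hbound : ∀ x, ‖Φ t x‖ ≤ Set.indicator (Set.Ioc 0 t) (fun _ => D) x := by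
        intro x
        simp only [hΦ]
        by_cases hx : x ∈ Set.Ioc 0 t
        · rw [Set.indicator_of_mem hx, Set.indicator_of_mem hx]
          obtain ⟨hx0, hxt⟩ := hx
          have htx : 0 ≤ t - x := by linarith
          have h1 : |g (t-x)| ≤ C * (1 + (t-x)) := hgb _ htx
          have h2 : Real.exp (-l*x) ≤ 1 := by
            apply Real.exp_le_one_iff.2; nlinarith
          simp only [hF]
          rw [Real.norm_eq_abs]
          have h3 : |Real.exp (-s*t) * (l * Real.exp (-l*x) * g (t-x))|
              = Real.exp (-s*t) * (l * Real.exp (-l*x) * |g (t-x)|) := by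
            rw [abs_mul, abs_mul, abs_of_pos (Real.exp_pos _),
              abs_mul, abs_of_pos hl, abs_of_pos (Real.exp_pos _)]
          rw [h3, hD]
          have h4 : |g (t-x)| ≤ C * (1 + t) := by nlinarith
          have h5 : Real.exp (-l*x) * |g (t-x)| ≤ 1 * (C * (1+t)) :=
            mul_le_mul h2 h4 (abs_nonneg _) zero_le_one
          rw [one_mul] at h5
          have h6 := mul_le_mul_of_nonneg_left h5
            (mul_nonneg (Real.exp_pos (-s*t)).le hl.le)
          nlinarith [h6]
        · rw [Set.indicator_of_notMem hx, Set.indicator_of_notMem hx]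
          simp
      have hintD : Integrable (Set.indicator (Set.Ioc 0 t) (fun _ => D)) volume := by
        rw [integrable_indicator_iff measurableSet_Ioc]
        exact integrableOn_const measure_Ioc_lt_top.ne
      calc (∫ x, ‖Φ t x‖) ≤ ∫ x, Set.indicator (Set.Ioc 0 t) (fun _ => D) x :=
            integral_mono_of_nonneg (Filter.Eventually.of_forall fun x => norm_nonneg _)
              hintD (Filter.Eventually.of_forall hbound)
        _ = (l*C) * (Real.exp (-s*t) * t + Real.exp (-s*t) * t^2) := by
            rw [MeasureTheory.integral_indicator measurableSet_Ioc, setIntegral_const,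
              Real.volume_real_Ioc_of_le (by linarith), smul_eq_mul]
            rw [hD]; ring
  have hswap := integral_integral_swap hInt
  have hLHS : (∫ t in Set.Ioi (0:ℝ),
      Real.exp (-s*t) * ∫ x in (0:ℝ)..t, l * Real.exp (-l*x) * g (t-x))
      = ∫ t in Set.Ioi (0:ℝ), ∫ x, Φ t x := by
    refine setIntegral_congr_fun measurableSet_Ioi (fun t ht => ?_)
    have ht0 : (0:ℝ) < t := Set.mem_Ioi.1 ht
    rw [← intervalIntegral.integral_const_mul, intervalIntegral.integral_of_le ht0.le,
      ← MeasureTheory.integral_indicator measurableSet_Ioc]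
    simp only [hΦ, hF]
  have hinner : ∀ x, (∫ t in Set.Ioi (0:ℝ), Φ t x)
      = Set.indicator (Set.Ioi 0) (fun x => l * Real.exp (-(s+l)*x) * B) x := by
    intro x
    by_cases hx0 : 0 < x
    · rw [Set.indicator_of_mem (Set.mem_Ioi.2 hx0)]
      have h1 : ∀ t ∈ Set.Ioi (0:ℝ), Φ t x
          = Set.indicator (Set.Ici x) (fun t => F t x) t := by
        intro t _
        simp only [hΦ]
        by_cases hxt : x ≤ t
        · rw [Set.indicator_of_mem (Set.mem_Ioc.2 ⟨hx0, hxt⟩),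
            Set.indicator_of_mem (Set.mem_Ici.2 hxt)]
        · rw [Set.indicator_of_notMem (fun h => hxt (Set.mem_Ioc.1 h).2),
            Set.indicator_of_notMem (fun h => hxt (Set.mem_Ici.1 h))]
      rw [setIntegral_congr_fun measurableSet_Ioi h1,
        setIntegral_indicator measurableSet_Ici,
        show Set.Ioi (0:ℝ) ∩ Set.Ici x = Set.Ici x from
          Set.inter_eq_right.mpr (fun y hy => lt_of_lt_of_le hx0 hy),
        integral_Ici_eq_integral_Ioi]
      have hemb : MeasurableEmbedding (fun y : ℝ => y + x) :=
        (Homeomorph.addRight x).isClosedEmbedding.measurableEmbedding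
      have hpre : (fun y : ℝ => y + x) ⁻¹' Set.Ioi x = Set.Ioi 0 := by
        ext y; simp
      have hmp := (measurePreserving_add_right volume x).setIntegral_preimage_emb hemb
        (fun t => F t x) (Set.Ioi x)
      rw [hpre] at hmp
      rw [← hmp]
      have h2 : ∀ y ∈ Set.Ioi (0:ℝ), F (y + x) x
          = (l * Real.exp (-(s+l)*x)) * (Real.exp (-s*y) * g y) := by
        intro y _
        simp only [hF, add_sub_cancel_right]
        rw [show -s*(y+x) = -s*y + -s*x by ring, Real.exp_add,
          show -(s+l)*x = -s*x + -l*x by ring, Real.exp_add]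
        ring
      rw [setIntegral_congr_fun measurableSet_Ioi h2, MeasureTheory.integral_const_mul, ← hB]
    · rw [Set.indicator_of_notMem (fun h => hx0 (Set.mem_Ioi.1 h))]
      have hz : ∀ t, Φ t x = 0 := by
        intro t
        simp only [hΦ]
        exact Set.indicator_of_notMem (fun h => hx0 (Set.mem_Ioc.1 h).1) _
      simp [hz]
  rw [hLHS, ← hB]
  calc (∫ t in Set.Ioi (0:ℝ), ∫ x, Φ t x)
      = ∫ x, ∫ t in Set.Ioi (0:ℝ), Φ t x := hswap
    _ = ∫ x, Set.indicator (Set.Ioi 0) (fun x => l * Real.exp (-(s+l)*x) * B) x :=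
        integral_congr_ae (Filter.Eventually.of_forall hinner)
    _ = ∫ x in Set.Ioi (0:ℝ), l * Real.exp (-(s+l)*x) * B := by
        rw [MeasureTheory.integral_indicator measurableSet_Ioi]
    _ = (l * B) * ∫ x in Set.Ioi (0:ℝ), Real.exp (-(s+l)*x) := by
        rw [← MeasureTheory.integral_const_mul]
        exact setIntegral_congr_fun measurableSet_Ioi (fun x _ => by ring)
    _ = l / (s + l) * B := by
        rw [Ioi_integral_exp (by linarith)]
        field_simp

lemma lt_integrableOn {s C : ℝ} (hs : 0 < s) {g : ℝ → ℝ} (hg : Continuous g)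
    (hgb : ∀ t ≥ (0:ℝ), |g t| ≤ C * (1 + t)) :
    IntegrableOn (fun t : ℝ => Real.exp (-s * t) * g t) (Set.Ioi 0) := by
  have hC : 0 ≤ C := by
    have := hgb 0 le_rfl
    simp at this
    exact le_trans (abs_nonneg _) this
  refine Integrable.mono' (g := fun t => C * (Real.exp (-s*t) + Real.exp (-s*t) * t))
    (((intOn_exp hs).add (intOn_texp hs)).const_mul C)
    ((Real.continuous_exp.comp (continuous_const.mul continuous_id)).mul hg).aestronglyMeasurable
    ?_
  rw [ae_restrict_iff' measurableSet_Ioi]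
  filter_upwards with t ht
  have ht0 : (0:ℝ) ≤ t := (Set.mem_Ioi.1 ht).le
  have h1 : |Real.exp (-s*t) * g t| = Real.exp (-s*t) * |g t| := by
    rw [abs_mul, abs_of_pos (Real.exp_pos _)]
  rw [Real.norm_eq_abs, h1]
  calc Real.exp (-s*t) * |g t| ≤ Real.exp (-s*t) * (C * (1+t)) := by
        exact mul_le_mul_of_nonneg_left (hgb t ht0) (Real.exp_pos _).le
    _ = C * (Real.exp (-s*t) + Real.exp (-s*t) * t) := by ring

theorem stmt_11 (lc ld : ℝ) (hlc : 0 < lc) (hld : 0 < ld)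
    (Mup Mdown : ℝ → ℝ)
    (hMupCont : ContinuousOn Mup (Set.Ici 0))
    (hMdownCont : ContinuousOn Mdown (Set.Ici 0))
    (hMupGrowth : ∃ C > (0 : ℝ), ∀ t ≥ (0 : ℝ), |Mup t| ≤ C * (1 + t))
    (hMdownGrowth : ∃ C > (0 : ℝ), ∀ t ≥ (0 : ℝ), |Mdown t| ≤ C * (1 + t))
    (hUp : ∀ t ≥ (0 : ℝ),
      Mup t = t * Real.exp (-lc * t) +
        ∫ x in (0 : ℝ)..t, lc * Real.exp (-lc * x) * (x + Mdown (t - x)))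
    (hDown : ∀ t ≥ (0 : ℝ),
      Mdown t = ∫ x in (0 : ℝ)..t, ld * Real.exp (-ld * x) * Mup (t - x)) :
    ∀ s > (0 : ℝ),
      (∫ t in Set.Ioi (0 : ℝ), Real.exp (-s * t) * Mdown t) =
        (ld / (s + ld)) * (1 - lc / (s + lc)) /
          (s ^ 2 * (1 - (lc / (s + lc)) * (ld / (s + ld)))) := by
  intro s hs
  obtain ⟨Mu, hMu⟩ : ∃ f : ℝ → ℝ, f = fun u => Mup (max u 0) := ⟨_, rfl⟩
  obtain ⟨Md, hMd⟩ : ∃ f : ℝ → ℝ, f = fun u => Mdown (max u 0) := ⟨_, rfl⟩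
  have hMuE : ∀ u : ℝ, 0 ≤ u → Mu u = Mup u := by
    intro u hu; rw [hMu]; simp only [max_eq_left hu]
  have hMdE : ∀ u : ℝ, 0 ≤ u → Md u = Mdown u := by
    intro u hu; rw [hMd]; simp only [max_eq_left hu]
  have hmax : Continuous (fun u : ℝ => max u 0) := continuous_id.max continuous_const
  have hMuC : Continuous Mu := by
    rw [hMu]
    exact hMupCont.comp_continuous hmax (fun x => Set.mem_Ici.2 (le_max_right _ _))
  have hMdC : Continuous Md := by
    rw [hMd]
    exact hMdownCont.comp_continuous hmax (fun x => Set.mem_Ici.2 (le_max_right _ _))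
  obtain ⟨C1, hC1pos, hC1⟩ := hMupGrowth
  obtain ⟨C2, hC2pos, hC2⟩ := hMdownGrowth
  have hMuG : ∀ t ≥ (0:ℝ), |Mu t| ≤ C1 * (1 + t) := by
    intro t ht; rw [hMuE t ht]; exact hC1 t ht
  have hMdG : ∀ t ≥ (0:ℝ), |Md t| ≤ C2 * (1 + t) := by
    intro t ht; rw [hMdE t ht]; exact hC2 t ht
  obtain ⟨G, hG⟩ : ∃ f : ℝ → ℝ, f = fun u => Md u - u := ⟨_, rfl⟩
  have hGC : Continuous G := by rw [hG]; exact hMdC.sub continuous_id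
  have hGG : ∀ t ≥ (0:ℝ), |G t| ≤ (C2 + 1) * (1 + t) := by
    intro t ht
    rw [hG]
    calc |Md t - t| ≤ |Md t| + |t| := abs_sub _ _
      _ ≤ C2 * (1 + t) + t := by
          have := hMdG t ht
          have : |t| = t := abs_of_nonneg ht
          linarith [hMdG t ht, abs_of_nonneg ht]
      _ ≤ (C2 + 1) * (1 + t) := by nlinarith
  -- basic integrabilities
  have hAint : IntegrableOn (fun t : ℝ => Real.exp (-s*t) * Mu t) (Set.Ioi 0) :=
    lt_integrableOn hs hMuC hMuG
  have hBint : IntegrableOn (fun t : ℝ => Real.exp (-s*t) * Md t) (Set.Ioi 0) :=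
    lt_integrableOn hs hMdC hMdG
  have hGint : IntegrableOn (fun t : ℝ => Real.exp (-s*t) * G t) (Set.Ioi 0) :=
    lt_integrableOn hs hGC hGG
  have htexp := Ioi_integral_texp hs
  -- renewal identity for Mu
  have hMuEq : ∀ t : ℝ, 0 ≤ t →
      Mu t = t + ∫ x in (0:ℝ)..t, lc * Real.exp (-lc*x) * G (t-x) := by
    intro t ht
    have h1 : (∫ x in (0:ℝ)..t, lc * Real.exp (-lc * x) * (x + Mdown (t - x)))
        = ∫ x in (0:ℝ)..t,
            (t * (lc * Real.exp (-lc*x)) + lc * Real.exp (-lc*x) * G (t-x)) := by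
      refine intervalIntegral.integral_congr (fun x hx => ?_)
      rw [Set.uIcc_of_le ht] at hx
      obtain ⟨hx0, hxt⟩ := hx
      have htx : (0:ℝ) ≤ t - x := by linarith
      rw [hG]
      simp only
      rw [← hMdE _ htx]
      ring
    have h2 : IntervalIntegrable (fun x => t * (lc * Real.exp (-lc*x))) volume 0 t :=
      (continuous_const.mul
        (continuous_const.mul (Real.continuous_exp.comp
          (continuous_const.mul continuous_id)))).intervalIntegrable _ _
    have h3 : IntervalIntegrable (fun x => lc * Real.exp (-lc*x) * G (t-x)) volume 0 t :=
      ((continuous_const.mul (Real.continuous_exp.comp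
          (continuous_const.mul continuous_id))).mul
        (hGC.comp (continuous_const.sub continuous_id))).intervalIntegrable _ _
    have h4 : (∫ x in (0:ℝ)..t, lc * Real.exp (-lc*x)) = 1 - Real.exp (-lc*t) := by
      have hderiv : ∀ x ∈ Set.uIcc (0:ℝ) t,
          HasDerivAt (fun x : ℝ => -Real.exp (-lc*x)) (lc * Real.exp (-lc*x)) x := by
        intro x _
        have hd1 : HasDerivAt (fun x : ℝ => -lc * x) (-lc) x := by
          simpa using (hasDerivAt_id x).const_mul (-lc)
        have hd2 := (Real.hasDerivAt_exp (-lc*x)).comp x hd1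
        have hd3 : HasDerivAt (fun x : ℝ => -Real.exp (-lc*x)) (-(Real.exp (-lc*x) * -lc)) x :=
          hd2.neg
        convert hd3 using 1
        ring
      have hint : IntervalIntegrable (fun x : ℝ => lc * Real.exp (-lc*x)) volume 0 t :=
        (continuous_const.mul (Real.continuous_exp.comp
          (continuous_const.mul continuous_id))).intervalIntegrable _ _
      rw [intervalIntegral.integral_eq_sub_of_hasDerivAt hderiv hint]
      simp only [mul_zero, neg_zero, neg_mul, Real.exp_zero]
      ring
    rw [hMuE t ht, hUp t ht, h1, intervalIntegral.integral_add h2 h3,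
      intervalIntegral.integral_const_mul, h4]
    ring
  -- equation A
  have hconvint : IntegrableOn
      (fun t : ℝ => Real.exp (-s*t) * ∫ x in (0:ℝ)..t, lc * Real.exp (-lc*x) * G (t-x))
      (Set.Ioi 0) := by
    have hsub : IntegrableOn
        (fun t : ℝ => Real.exp (-s*t) * Mu t - Real.exp (-s*t) * t) (Set.Ioi 0) :=
      hAint.sub (intOn_texp hs)
    refine hsub.congr_fun (fun t ht => ?_) measurableSet_Ioi
    have ht0 : (0:ℝ) ≤ t := (Set.mem_Ioi.1 ht).le
    beta_reduce
    rw [hMuEq t ht0]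
    ring
  have hGval : (∫ t in Set.Ioi (0:ℝ), Real.exp (-s*t) * G t)
      = (∫ t in Set.Ioi (0:ℝ), Real.exp (-s*t) * Md t) - 1/s^2 := by
    rw [← htexp, ← integral_sub hBint (intOn_texp hs)]
    refine setIntegral_congr_fun measurableSet_Ioi (fun t _ => ?_)
    rw [hG]; ring
  have hA : (∫ t in Set.Ioi (0:ℝ), Real.exp (-s*t) * Mu t)
      = 1/s^2 + lc/(s+lc) * ((∫ t in Set.Ioi (0:ℝ), Real.exp (-s*t) * Md t) - 1/s^2) := by
    have e1 : (∫ t in Set.Ioi (0:ℝ), Real.exp (-s*t) * Mu t)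
        = ∫ t in Set.Ioi (0:ℝ), (Real.exp (-s*t) * t +
            Real.exp (-s*t) * ∫ x in (0:ℝ)..t, lc * Real.exp (-lc*x) * G (t-x)) := by
      refine setIntegral_congr_fun measurableSet_Ioi (fun t ht => ?_)
      rw [hMuEq t (Set.mem_Ioi.1 ht).le]
      ring
    rw [e1, integral_add (intOn_texp hs) hconvint, htexp,
      lt_conv hlc hs hGC hGG, hGval]
  -- equation B
  have hB : (∫ t in Set.Ioi (0:ℝ), Real.exp (-s*t) * Md t)
      = ld/(s+ld) * ∫ t in Set.Ioi (0:ℝ), Real.exp (-s*t) * Mu t := by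
    have e1 : (∫ t in Set.Ioi (0:ℝ), Real.exp (-s*t) * Md t)
        = ∫ t in Set.Ioi (0:ℝ), Real.exp (-s*t) *
            ∫ x in (0:ℝ)..t, ld * Real.exp (-ld*x) * Mu (t-x) := by
      refine setIntegral_congr_fun measurableSet_Ioi (fun t ht => ?_)
      have ht0 : (0:ℝ) ≤ t := (Set.mem_Ioi.1 ht).le
      rw [hMdE t ht0, hDown t ht0]
      congr 1
      refine intervalIntegral.integral_congr (fun x hx => ?_)
      rw [Set.uIcc_of_le ht0] at hx
      obtain ⟨hx0, hxt⟩ := hx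
      rw [hMuE _ (by linarith : (0:ℝ) ≤ t - x)]
    rw [e1, lt_conv hld hs hMuC hMuG]
  -- final algebra
  have hgoal : (∫ t in Set.Ioi (0:ℝ), Real.exp (-s*t) * Mdown t)
      = ∫ t in Set.Ioi (0:ℝ), Real.exp (-s*t) * Md t := by
    refine setIntegral_congr_fun measurableSet_Ioi (fun t ht => ?_)
    rw [hMdE t (Set.mem_Ioi.1 ht).le]
  rw [hgoal]
  obtain ⟨Bv, hBveq⟩ : ∃ x : ℝ, x = ∫ t in Set.Ioi (0:ℝ), Real.exp (-s*t) * Md t := ⟨_, rfl⟩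
  obtain ⟨Av, hAveq⟩ : ∃ x : ℝ, x = ∫ t in Set.Ioi (0:ℝ), Real.exp (-s*t) * Mu t := ⟨_, rfl⟩
  rw [← hBveq, ← hAveq] at hA hB
  rw [← hBveq]
  rw [hA] at hB
  have hs0 : s ≠ 0 := ne_of_gt hs
  have hsc : s + lc ≠ 0 := by positivity
  have hsd : s + ld ≠ 0 := by positivity
  have hprod : lc/(s+lc) * (ld/(s+ld)) < 1 := by
    rw [div_mul_div_comm]
    refine (div_lt_one (by positivity)).2 ?_
    nlinarith
  have hY : s^2 * (1 - lc/(s+lc)*(ld/(s+ld))) ≠ 0 :=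
    ne_of_gt (mul_pos (pow_pos hs 2) (by linarith))
  have hY2 : s^2 * ((s+lc)*(s+ld) - lc*ld) ≠ 0 := by
    have h1 : (0:ℝ) < (s+lc)*(s+ld) - lc*ld := by nlinarith
    positivity
  have hBv : Bv * (s^2 * ((s+lc)*(s+ld) - lc*ld)) = ld * s := by
    field_simp at hB
    linear_combination hB
  have hval : (ld/(s+ld)) * (1 - lc/(s+lc)) / (s^2 * (1 - (lc/(s+lc)) * (ld/(s+ld))))
      = ld * s / (s^2 * ((s+lc)*(s+ld) - lc*ld)) := by
    rw [div_eq_div_iff hY hY2]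
    field_simp
    ring
  rw [hval, eq_div_iff hY2]
  linear_combination hBv
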